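/- Let c ≥ 0 be real and λ ≤ μ partitions of n in the dominance ordering. Then m + c(n(λ) − n(λᵗ)) + n(λ) ≥ m + c(n(μ) − n(μᵗ)) + n(μ), with equality if and only if λ = μ. -/

import Mathlib

/-- The partition statistic `n(μ) = Σ_i (i-1)·μ_i`, computed as the sum of the
(0-indexed) row indices of the cells of the Young diagram. -/
def nStat (μ : YoungDiagram) : ℕ := ∑ c ∈ μ.cells, c.1

/-- Dominance ordering on Young diagrams (partitions). -/
def Dominates (lam μ : YoungDiagram) : Prop :=
  ∀ k : ℕ, ∑ i ∈ Finset.range k, lam.rowLen i ≤ ∑ i ∈ Finset.range k, μ.rowLen i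

/-- A downward-closed finset of naturals is an initial segment. -/
lemma lowerset_eq_range (s : Finset ℕ) (h : ∀ a ∈ s, ∀ b < a, b ∈ s) :
    s = Finset.range s.card := by
  have hsub : Finset.range s.card ⊆ s := by
    intro m hm
    rw [Finset.mem_range] at hm
    by_contra hms
    have hsr : s ⊆ Finset.range m := by
      intro a ha
      rw [Finset.mem_range]
      by_contra hma
      push_neg at hma
      rcases eq_or_lt_of_le hma with rfl | hlt
      · exact hms ha
      · exact hms (h a ha m hlt)
    have := Finset.card_le_card hsr
    simp only [Finset.card_range] at this
    omega
  exact (Finset.eq_of_subset_of_card_le hsub (by simp)).symm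

lemma fst_lt_card {μ : YoungDiagram} {c : ℕ × ℕ} (hc : c ∈ μ.cells) : c.1 < μ.cells.card := by
  rw [YoungDiagram.mem_cells] at hc
  have h0 : (c.1, 0) ∈ μ := μ.up_left_mem le_rfl (Nat.zero_le _) hc
  have h1 : c.1 < μ.colLen 0 := YoungDiagram.mem_iff_lt_colLen.mp h0
  have h2 : μ.colLen 0 ≤ μ.cells.card := by
    rw [μ.colLen_eq_card]
    exact Finset.card_le_card (by
      intro x hx; rw [YoungDiagram.mem_col_iff] at hx
      exact (YoungDiagram.mem_cells _).mpr hx.1)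
  omega

lemma snd_lt_card {μ : YoungDiagram} {c : ℕ × ℕ} (hc : c ∈ μ.cells) : c.2 < μ.cells.card := by
  rw [YoungDiagram.mem_cells] at hc
  have h1 : c.2 < μ.rowLen c.1 := by
    rw [← YoungDiagram.mem_iff_lt_rowLen]; exact hc
  have h2 : μ.rowLen c.1 ≤ μ.cells.card := by
    rw [μ.rowLen_eq_card]
    exact Finset.card_le_card (by
      intro x hx; rw [YoungDiagram.mem_row_iff] at hx
      exact (YoungDiagram.mem_cells _).mpr hx.1)
  omega

/-- Generic counting: sum of `f` over `s` as a sum of level-set cardinalities. -/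
lemma sum_eq_sum_filter_card {α : Type*} (s : Finset α) (f : α → ℕ) (N : ℕ)
    (h : ∀ c ∈ s, f c < N) :
    ∑ c ∈ s, f c = ∑ k ∈ Finset.range N, (s.filter fun c => k < f c).card := by
  simp_rw [Finset.card_filter]
  rw [Finset.sum_comm]
  refine Finset.sum_congr rfl fun c hc => ?_
  have he : ∀ k, (if k < f c then (1:ℕ) else 0) = if k ∈ Finset.range (f c) then 1 else 0 := by
    intro k; simp [Finset.mem_range]
  simp_rw [he]
  have hsub : Finset.range (f c) ⊆ Finset.range N := by
    intro x hx
    rw [Finset.mem_range] at hx ⊢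
    exact hx.trans (h c hc)
  rw [Finset.sum_ite_mem, Finset.inter_eq_right.mpr hsub, Finset.sum_const, smul_eq_mul,
    mul_one, Finset.card_range]

lemma filter_card_eq_sum_rows (μ : YoungDiagram) (P : ℕ × ℕ → Prop) [DecidablePred P] :
    (μ.cells.filter P).card
      = ∑ i ∈ Finset.range μ.cells.card, ((μ.row i).filter P).card := by
  rw [← Finset.card_biUnion]
  · congr 1
    ext c
    simp only [Finset.mem_filter, Finset.mem_biUnion, Finset.mem_range, YoungDiagram.mem_row_iff,
      YoungDiagram.mem_cells]
    constructor
    · rintro ⟨hc, hP⟩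
      exact ⟨c.1, fst_lt_card ((YoungDiagram.mem_cells c).mpr hc), ⟨⟨hc, rfl⟩, hP⟩⟩
    · rintro ⟨i, _, ⟨⟨hc, rfl⟩, hP⟩⟩
      exact ⟨hc, hP⟩
  · intro i _ j _ hij
    apply Finset.disjoint_left.mpr
    intro c hc hc'
    simp only [Finset.mem_filter, YoungDiagram.mem_row_iff] at hc hc'
    exact hij (hc.1.2 ▸ hc'.1.2 ▸ rfl)

lemma row_filter_fst (μ : YoungDiagram) (i k : ℕ) :
    ((μ.row i).filter fun c => c.1 < k).card = if i < k then μ.rowLen i else 0 := by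
  split_ifs with h
  · rw [Finset.filter_true_of_mem, ← YoungDiagram.rowLen_eq_card]
    intro c hc
    rw [YoungDiagram.mem_row_iff] at hc
    rw [hc.2]; exact h
  · rw [Finset.filter_false_of_mem, Finset.card_empty]
    intro c hc
    rw [YoungDiagram.mem_row_iff] at hc
    omega

lemma row_filter_snd (μ : YoungDiagram) (i k : ℕ) :
    ((μ.row i).filter fun c => k < c.2).card = μ.rowLen i - (k + 1) := by
  rw [YoungDiagram.row_eq_prod]
  have h1 : (({i} ×ˢ Finset.range (μ.rowLen i)).filter fun c => k < c.2)
      = {i} ×ˢ ((Finset.range (μ.rowLen i)).filter fun j => k < j) := by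
    ext c
    simp only [Finset.mem_filter, Finset.mem_product, Finset.mem_singleton, Finset.mem_range]
    tauto
  rw [h1, Finset.card_product, Finset.card_singleton, one_mul]
  have h2 : (Finset.range (μ.rowLen i)).filter (fun j => k < j) = Finset.Ico (k+1) (μ.rowLen i) := by
    ext j; simp only [Finset.mem_filter, Finset.mem_range, Finset.mem_Ico]; omega
  rw [h2, Nat.card_Ico]

/-- Prefix sums of row lengths as filter cardinalities. -/
lemma prefix_eq_filter_card (μ : YoungDiagram) (k : ℕ) (hk : k ≤ μ.cells.card) :
    ∑ i ∈ Finset.range k, μ.rowLen i = (μ.cells.filter fun c => c.1 < k).card := by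
  rw [filter_card_eq_sum_rows]
  rw [Finset.sum_congr rfl (fun i _ => row_filter_fst μ i k), Finset.sum_ite,
    Finset.sum_const_zero, add_zero]
  have h : (Finset.range μ.cells.card).filter (· < k) = Finset.range k := by
    ext j; simp only [Finset.mem_filter, Finset.mem_range]; omega
  rw [h]

lemma snd_filter_card (μ : YoungDiagram) (k : ℕ) :
    (μ.cells.filter fun c => k < c.2).card
      = ∑ i ∈ Finset.range μ.cells.card, (μ.rowLen i - (k + 1)) := by
  rw [filter_card_eq_sum_rows]
  exact Finset.sum_congr rfl fun i _ => row_filter_snd μ i k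

/-- Key convexity lemma: dominance implies comparison of truncated-subtraction sums. -/
lemma key_tsub (lam μ : YoungDiagram) (n K : ℕ)
    (hdom : Dominates lam μ) :
    ∑ i ∈ Finset.range n, (lam.rowLen i - K) ≤ ∑ i ∈ Finset.range n, (μ.rowLen i - K) := by
  set s := (Finset.range n).filter (fun i => K < lam.rowLen i) with hs
  have hdc : s = Finset.range s.card := by
    apply lowerset_eq_range
    intro a ha b hb
    simp only [hs, Finset.mem_filter, Finset.mem_range] at ha ⊢
    exact ⟨by omega, lt_of_lt_of_le ha.2 (lam.rowLen_anti b a (le_of_lt hb))⟩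
  set r := s.card with hr
  have hrn : r ≤ n := by
    rw [hr, hs]
    exact le_trans (Finset.card_filter_le _ _) (by simp)
  have hmem : ∀ i ∈ Finset.range r, K < lam.rowLen i := by
    intro i hi
    have hi' : i ∈ s := by rw [hdc]; exact hi
    simp only [hs, Finset.mem_filter] at hi'
    exact hi'.2
  have h1 : ∑ i ∈ Finset.range n, (lam.rowLen i - K)
      = ∑ i ∈ Finset.range r, (lam.rowLen i - K) := by
    rw [← Finset.sum_filter_add_sum_filter_not (Finset.range n) (fun i => K < lam.rowLen i)]
    have hz : ∑ i ∈ (Finset.range n).filter (fun i => ¬ K < lam.rowLen i),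
        (lam.rowLen i - K) = 0 := by
      apply Finset.sum_eq_zero
      intro i hi
      simp only [Finset.mem_filter, not_lt] at hi
      omega
    rw [hz, add_zero, ← hs, hdc]
  have h2 : ∑ i ∈ Finset.range r, (lam.rowLen i - K) + r * K
      = ∑ i ∈ Finset.range r, lam.rowLen i := by
    have e : ∑ i ∈ Finset.range r, lam.rowLen i
        = ∑ i ∈ Finset.range r, ((lam.rowLen i - K) + K) :=
      Finset.sum_congr rfl fun i hi => (Nat.sub_add_cancel (hmem i hi).le).symm
    rw [e, Finset.sum_add_distrib, Finset.sum_const, Finset.card_range, smul_eq_mul]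
  have h3 : ∑ i ∈ Finset.range r, lam.rowLen i ≤ ∑ i ∈ Finset.range r, μ.rowLen i := hdom r
  have h4 : ∑ i ∈ Finset.range r, μ.rowLen i
      ≤ ∑ i ∈ Finset.range r, (μ.rowLen i - K) + r * K := by
    have e : ∀ i ∈ Finset.range r, μ.rowLen i ≤ (μ.rowLen i - K) + K := fun i _ => by omega
    calc ∑ i ∈ Finset.range r, μ.rowLen i ≤ ∑ i ∈ Finset.range r, ((μ.rowLen i - K) + K) :=
          Finset.sum_le_sum e
      _ = ∑ i ∈ Finset.range r, (μ.rowLen i - K) + r * K := by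
          rw [Finset.sum_add_distrib, Finset.sum_const, Finset.card_range, smul_eq_mul]
  have h5 : ∑ i ∈ Finset.range r, (μ.rowLen i - K) ≤ ∑ i ∈ Finset.range n, (μ.rowLen i - K) :=
    Finset.sum_le_sum_of_subset (Finset.range_subset_range.mpr hrn)
  omega

lemma nStat_transpose (μ : YoungDiagram) : nStat μ.transpose = ∑ c ∈ μ.cells, c.2 := by
  show ∑ c ∈ (μ.cells.map (Equiv.prodComm ℕ ℕ).toEmbedding), c.1 = ∑ c ∈ μ.cells, c.2
  rw [Finset.sum_map]
  rfl

lemma compl_card (μ : YoungDiagram) (k : ℕ) :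
    (μ.cells.filter fun c => k < c.1).card + (μ.cells.filter fun c => c.1 < k + 1).card
      = μ.cells.card := by
  have h := Finset.card_filter_add_card_filter_not
    (s := μ.cells) (p := fun c => k < c.1)
  have he : μ.cells.filter (fun c => ¬ k < c.1) = μ.cells.filter (fun c => c.1 < k + 1) := by
    apply Finset.filter_congr
    intro x _
    constructor <;> (intro; omega)
  rw [he] at h
  exact h

lemma fst_filter_le (lam μ : YoungDiagram) (n : ℕ)
    (hlam : lam.cells.card = n) (hμ : μ.cells.card = n)
    (hdom : Dominates lam μ) (k : ℕ) (hk : k < n) :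
    (μ.cells.filter fun c => k < c.1).card ≤ (lam.cells.filter fun c => k < c.1).card := by
  have h1 := compl_card lam k
  have h2 := compl_card μ k
  have h3 := prefix_eq_filter_card lam (k+1) (by omega)
  have h4 := prefix_eq_filter_card μ (k+1) (by omega)
  have h5 := hdom (k+1)
  omega

lemma nStat_le (lam μ : YoungDiagram) (n : ℕ)
    (hlam : lam.cells.card = n) (hμ : μ.cells.card = n)
    (hdom : Dominates lam μ) : nStat μ ≤ nStat lam := by
  unfold nStat
  rw [sum_eq_sum_filter_card lam.cells _ n (fun c hc => hlam ▸ fst_lt_card hc),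
    sum_eq_sum_filter_card μ.cells _ n (fun c hc => hμ ▸ fst_lt_card hc)]
  exact Finset.sum_le_sum fun k hk =>
    fst_filter_le lam μ n hlam hμ hdom k (Finset.mem_range.mp hk)

lemma nStat_transpose_le (lam μ : YoungDiagram) (n : ℕ)
    (hlam : lam.cells.card = n) (hμ : μ.cells.card = n)
    (hdom : Dominates lam μ) : nStat lam.transpose ≤ nStat μ.transpose := by
  rw [nStat_transpose, nStat_transpose,
    sum_eq_sum_filter_card lam.cells _ n (fun c hc => hlam ▸ snd_lt_card hc),
    sum_eq_sum_filter_card μ.cells _ n (fun c hc => hμ ▸ snd_lt_card hc)]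
  refine Finset.sum_le_sum fun k _ => ?_
  rw [snd_filter_card, snd_filter_card, hlam, hμ]
  exact key_tsub lam μ n (k+1) hdom

lemma eq_of_nStat_eq (lam μ : YoungDiagram) (n : ℕ)
    (hlam : lam.cells.card = n) (hμ : μ.cells.card = n)
    (hdom : Dominates lam μ) (h : nStat lam = nStat μ) : lam = μ := by
  unfold nStat at h
  rw [sum_eq_sum_filter_card lam.cells _ n (fun c hc => hlam ▸ fst_lt_card hc),
    sum_eq_sum_filter_card μ.cells _ n (fun c hc => hμ ▸ fst_lt_card hc)] at h
  have hterm : ∀ k ∈ Finset.range n,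
      (μ.cells.filter fun c => k < c.1).card = (lam.cells.filter fun c => k < c.1).card := by
    rw [← Finset.sum_eq_sum_iff_of_le fun k hk =>
      fst_filter_le lam μ n hlam hμ hdom k (Finset.mem_range.mp hk)]
    exact h.symm
  have hpre : ∀ k ≤ n, ∑ i ∈ Finset.range k, lam.rowLen i = ∑ i ∈ Finset.range k, μ.rowLen i := by
    intro k hk
    match k with
    | 0 => simp
    | j + 1 =>
      have h1 := compl_card lam j
      have h2 := compl_card μ j
      have h3 := prefix_eq_filter_card lam (j+1) (by omega)
      have h4 := prefix_eq_filter_card μ (j+1) (by omega)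
      have h5 := hterm j (Finset.mem_range.mpr (by omega))
      omega
  have hrow : ∀ i, lam.rowLen i = μ.rowLen i := by
    intro i
    by_cases hi : i < n
    · have h1 := hpre i (by omega)
      have h2 := hpre (i+1) (by omega)
      rw [Finset.sum_range_succ, Finset.sum_range_succ] at h2
      omega
    · have hz : ∀ ν : YoungDiagram, ν.cells.card = n → ν.rowLen i = 0 := by
        intro ν hν
        by_contra hzz
        have hm : (i, 0) ∈ ν := YoungDiagram.mem_iff_lt_rowLen.mpr (by omega)
        have := fst_lt_card ((YoungDiagram.mem_cells (i, 0)).mpr hm)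
        rw [hν] at this
        exact hi this
      rw [hz lam hlam, hz μ hμ]
  ext ⟨i, j⟩
  rw [YoungDiagram.mem_cells, YoungDiagram.mem_cells, YoungDiagram.mem_iff_lt_rowLen,
    YoungDiagram.mem_iff_lt_rowLen, hrow i]

theorem weight_inequality_triv (n : ℕ) (c m : ℝ) (hc : 0 ≤ c)
    (lam μ : YoungDiagram)
    (hlam : lam.cells.card = n) (hμ : μ.cells.card = n)
    (hdom : Dominates lam μ) :
    m + c * ((nStat μ : ℝ) - (nStat μ.transpose : ℝ)) + (nStat μ : ℝ) ≤
      m + c * ((nStat lam : ℝ) - (nStat lam.transpose : ℝ)) + (nStat lam : ℝ) ∧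
    (m + c * ((nStat lam : ℝ) - (nStat lam.transpose : ℝ)) + (nStat lam : ℝ) =
      m + c * ((nStat μ : ℝ) - (nStat μ.transpose : ℝ)) + (nStat μ : ℝ) ↔ lam = μ) := by
  have h1 : nStat μ ≤ nStat lam := nStat_le lam μ n hlam hμ hdom
  have h2 : nStat lam.transpose ≤ nStat μ.transpose := nStat_transpose_le lam μ n hlam hμ hdom
  have hA : (nStat μ : ℝ) ≤ (nStat lam : ℝ) := Nat.cast_le.mpr h1
  have hB : (nStat lam.transpose : ℝ) ≤ (nStat μ.transpose : ℝ) := Nat.cast_le.mpr h2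
  have hC : c * ((nStat μ : ℝ) - (nStat μ.transpose : ℝ))
      ≤ c * ((nStat lam : ℝ) - (nStat lam.transpose : ℝ)) :=
    mul_le_mul_of_nonneg_left (by linarith) hc
  refine ⟨by linarith, ?_, ?_⟩
  · intro heq
    have hLM : (nStat lam : ℝ) = (nStat μ : ℝ) := by linarith
    exact eq_of_nStat_eq lam μ n hlam hμ hdom (Nat.cast_injective hLM)
  · rintro rfl
    rfl
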